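/- arXiv:2403.12752 — 4 statements merged into one kernel-verified Lean document; each statement's English description precedes it below -/
import Mathlib

section
/- Dirichlet's density theorem: the limit as n → ∞ of (1/n²)·#{(a,b) ∈ ℕ² : 1 ≤ a,b ≤ n and gcd(a,b) = 1} exists and equals 6/π². -/
open Filter Finset ArithmeticFunction Topology
open scoped ArithmeticFunction.Moebius

private lemma tsum_moebius : ∑' d : ℕ, ((μ d : ℝ) / (d : ℝ) ^ 2) = 6 / Real.pi ^ 2 := by
  have h2 : (1 : ℝ) < (2 : ℂ).re := by norm_num
  have hz := LSeries_zeta_mul_Lseries_moebius h2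
  rw [LSeries_zeta_eq_riemannZeta h2, riemannZeta_two] at hz
  have hpi : ((Real.pi : ℂ) ^ 2 / 6) ≠ 0 := by
    simp [Real.pi_ne_zero]
  have hmu : LSeries (fun n => (μ n : ℂ)) 2 = 6 / (Real.pi : ℂ) ^ 2 := by
    have hp2 : ((Real.pi : ℂ)) ^ 2 ≠ 0 := pow_ne_zero 2 (Complex.ofReal_ne_zero.mpr Real.pi_ne_zero)
    rw [eq_div_iff hp2]
    field_simp at hz
    linear_combination hz
  have hterm : ∀ d : ℕ, LSeries.term (fun n => (μ n : ℂ)) 2 d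
      = (((μ d : ℝ) / (d : ℝ) ^ 2 : ℝ) : ℂ) := by
    intro d
    rcases eq_or_ne d 0 with rfl | hd
    · simp [LSeries.term]
    · rw [LSeries.term_of_ne_zero hd]
      rw [show ((2 : ℂ)) = ((2 : ℕ) : ℂ) by norm_num, Complex.cpow_natCast]
      push_cast
      ring
  have : LSeries (fun n => (μ n : ℂ)) 2 = (((∑' d : ℕ, ((μ d : ℝ) / (d : ℝ) ^ 2)) : ℝ) : ℂ) := by
    rw [Complex.ofReal_tsum]
    exact tsum_congr hterm
  rw [this] at hmu
  have : ((6 : ℝ) / Real.pi ^ 2 : ℝ) = ((6 / (Real.pi : ℂ) ^ 2) : ℂ) := by push_cast; ring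
  exact_mod_cast hmu

private lemma div_tendsto (d : ℕ) (hd : 0 < d) :
    Tendsto (fun n : ℕ => ((n / d : ℕ) : ℝ) / (n : ℝ)) atTop (𝓝 (1 / (d : ℝ))) := by
  have hd' : (0 : ℝ) < d := by exact_mod_cast hd
  have hlow : Tendsto (fun n : ℕ => 1 / (d : ℝ) - 1 / (n : ℝ)) atTop (𝓝 (1 / d - 0)) :=
    tendsto_const_nhds.sub tendsto_one_div_atTop_nhds_zero_nat
  rw [sub_zero] at hlow
  refine tendsto_of_tendsto_of_tendsto_of_le_of_le' hlow tendsto_const_nhds ?_ ?_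
  · filter_upwards [eventually_ge_atTop 1] with n hn
    have hn' : (0 : ℝ) < n := by exact_mod_cast hn
    have key : (n : ℝ) < d * ((n / d : ℕ) : ℝ) + d := by
      have h1 : d * (n / d) + n % d = n := Nat.div_add_mod n d
      have h2 : n % d < d := Nat.mod_lt n hd
      have : n < d * (n / d) + d := by omega
      exact_mod_cast this
    rw [sub_le_iff_le_add, ← add_div, div_le_div_iff₀ hd' hn']
    nlinarith [key]
  · filter_upwards [eventually_ge_atTop 1] with n hn
    have hn' : (0 : ℝ) < n := by exact_mod_cast hn
    have : ((n / d : ℕ) : ℝ) ≤ (n : ℝ) / d := Nat.cast_div_le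
    rw [div_le_div_iff₀ hn' hd']
    calc ((n / d : ℕ) : ℝ) * d ≤ ((n : ℝ) / d) * d := by nlinarith
      _ = n := by field_simp
      _ = 1 * n := by ring

private lemma moebius_sum (n : ℕ) :
    ∑ d ∈ n.divisors, μ d = if n = 1 then 1 else 0 := by
  have h := congrArg (fun f : ArithmeticFunction ℤ => f n) moebius_mul_coe_zeta
  simp only [coe_mul_zeta_apply, one_apply] at h
  exact h


private lemma count_eq (n : ℕ) :
    (((Finset.Icc 1 n ×ˢ Finset.Icc 1 n).filter
        fun p : ℕ × ℕ => Nat.gcd p.1 p.2 = 1).card : ℤ)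
      = ∑ d ∈ Finset.Icc 1 n, μ d * ((n / d : ℕ) : ℤ) ^ 2 := by
  have hdiv : ∀ p ∈ Finset.Icc 1 n ×ˢ Finset.Icc 1 n,
      (Nat.gcd p.1 p.2).divisors = (Finset.Icc 1 n).filter (· ∣ Nat.gcd p.1 p.2) := by
    rintro ⟨a, b⟩ hp
    simp only [mem_product, Finset.mem_Icc] at hp
    obtain ⟨⟨ha1, ha2⟩, hb1, hb2⟩ := hp
    have hg0 : Nat.gcd a b ≠ 0 := Nat.gcd_ne_zero_left (by omega)
    ext d
    simp only [Nat.mem_divisors, Finset.mem_filter, Finset.mem_Icc]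
    constructor
    · rintro ⟨hd, -⟩
      refine ⟨⟨Nat.one_le_iff_ne_zero.2 ?_, ?_⟩, hd⟩
      · rintro rfl; exact hg0 (Nat.eq_zero_of_zero_dvd hd)
      · exact le_trans (Nat.le_of_dvd (Nat.pos_of_ne_zero hg0) hd)
          (le_trans (Nat.gcd_le_left b (by omega)) ha2)
    · rintro ⟨-, hd⟩; exact ⟨hd, hg0⟩
  calc (((Finset.Icc 1 n ×ˢ Finset.Icc 1 n).filter
        fun p : ℕ × ℕ => Nat.gcd p.1 p.2 = 1).card : ℤ)
      = ∑ p ∈ Finset.Icc 1 n ×ˢ Finset.Icc 1 n,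
          if Nat.gcd p.1 p.2 = 1 then (1 : ℤ) else 0 := by
        rw [Finset.card_filter]; push_cast; rfl
    _ = ∑ p ∈ Finset.Icc 1 n ×ˢ Finset.Icc 1 n,
          ∑ d ∈ (Nat.gcd p.1 p.2).divisors, μ d := by
        refine Finset.sum_congr rfl fun p hp => ?_
        rw [moebius_sum]
    _ = ∑ p ∈ Finset.Icc 1 n ×ˢ Finset.Icc 1 n,
          ∑ d ∈ Finset.Icc 1 n, if d ∣ Nat.gcd p.1 p.2 then μ d else 0 := by
        refine Finset.sum_congr rfl fun p hp => ?_
        rw [hdiv p hp, Finset.sum_filter]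
    _ = ∑ d ∈ Finset.Icc 1 n, ∑ p ∈ Finset.Icc 1 n ×ˢ Finset.Icc 1 n,
          if d ∣ Nat.gcd p.1 p.2 then μ d else 0 := Finset.sum_comm
    _ = ∑ d ∈ Finset.Icc 1 n, μ d * ((n / d : ℕ) : ℤ) ^ 2 := by
        refine Finset.sum_congr rfl fun d hd => ?_
        rw [← Finset.sum_filter, Finset.sum_const, nsmul_eq_mul, mul_comm]
        congr 1
        have : ((Finset.Icc 1 n ×ˢ Finset.Icc 1 n).filter
            fun p : ℕ × ℕ => d ∣ Nat.gcd p.1 p.2)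
            = ((Finset.Icc 1 n).filter (d ∣ ·)) ×ˢ ((Finset.Icc 1 n).filter (d ∣ ·)) := by
          rw [← Finset.filter_product]
          refine Finset.filter_congr fun p hp => ?_
          simp [Nat.dvd_gcd_iff]
        rw [this, Finset.card_product]
        have hc : ((Finset.Icc 1 n).filter (d ∣ ·)).card = n / d := by
          rw [show Finset.Icc 1 n = Finset.Ioc 0 n from rfl]
          exact Nat.Ioc_filter_dvd_card_eq_div n d
        rw [hc]; push_cast; ring

/-- **Dirichlet's density theorem**: the proportion of coprime pairs in
`{1,…,n} × {1,…,n}` tends to `6/π²` as `n → ∞`. -/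
theorem dirichlet_density :
    Tendsto
      (fun n : ℕ =>
        (((Finset.Icc 1 n ×ˢ Finset.Icc 1 n).filter
            fun p : ℕ × ℕ => Nat.gcd p.1 p.2 = 1).card : ℝ) / (n : ℝ) ^ 2)
      atTop (nhds (6 / Real.pi ^ 2)) := by
  classical
  set F : ℕ → ℕ → ℝ := fun n d =>
    if d ∈ Finset.Icc 1 n then (μ d : ℝ) * (((n / d : ℕ) : ℝ) / (n : ℝ)) ^ 2 else 0 with hFdef
  have hF : ∀ n : ℕ,
      (((Finset.Icc 1 n ×ˢ Finset.Icc 1 n).filter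
          fun p : ℕ × ℕ => Nat.gcd p.1 p.2 = 1).card : ℝ) / (n : ℝ) ^ 2
        = ∑' d : ℕ, F n d := by
    intro n
    rw [tsum_eq_sum (s := Finset.Icc 1 n) (fun d hd => if_neg hd)]
    have hcast : (((Finset.Icc 1 n ×ˢ Finset.Icc 1 n).filter
        fun p : ℕ × ℕ => Nat.gcd p.1 p.2 = 1).card : ℝ)
        = ∑ d ∈ Finset.Icc 1 n, (μ d : ℝ) * ((n / d : ℕ) : ℝ) ^ 2 := by
      have h' := congrArg (fun z : ℤ => (z : ℝ)) (count_eq n)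
      push_cast at h' ⊢
      exact h'
    rw [hcast, Finset.sum_div]
    refine Finset.sum_congr rfl fun d hd => ?_
    simp only [hFdef, if_pos hd]
    rw [div_pow, mul_div_assoc]
  have hsum : Summable (fun d : ℕ => 1 / (d : ℝ) ^ 2) :=
    Real.summable_one_div_nat_pow.mpr one_lt_two
  have hpt : ∀ d : ℕ, Tendsto (F · d) atTop (𝓝 ((μ d : ℝ) * (1 / (d : ℝ)) ^ 2)) := by
    intro d
    rcases Nat.eq_zero_or_pos d with rfl | hd
    · simpa [hFdef] using tendsto_const_nhds (α := ℝ) (f := atTop (α := ℕ))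
    · refine Tendsto.congr' ?_ (tendsto_const_nhds.mul ((div_tendsto d hd).pow 2))
      filter_upwards [eventually_ge_atTop d] with n hn
      have hmem : d ∈ Finset.Icc 1 n := Finset.mem_Icc.mpr ⟨hd, hn⟩
      exact (if_pos hmem).symm
  have hbd : ∀ᶠ n in atTop, ∀ d : ℕ, ‖F n d‖ ≤ 1 / (d : ℝ) ^ 2 := by
    refine Eventually.of_forall fun n d => ?_
    by_cases hd : d ∈ Finset.Icc 1 n
    · have hd1 : 1 ≤ d := (Finset.mem_Icc.mp hd).1
      have hdn : d ≤ n := (Finset.mem_Icc.mp hd).2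
      have hd' : (0 : ℝ) < d := by exact_mod_cast hd1
      have hn' : (0 : ℝ) < n := by exact_mod_cast lt_of_lt_of_le hd1 hdn
      have hq : ((n / d : ℕ) : ℝ) / (n : ℝ) ≤ 1 / d := by
        rw [div_le_div_iff₀ hn' hd']
        have h1 : ((n / d : ℕ) : ℝ) ≤ (n : ℝ) / d := Nat.cast_div_le
        calc ((n / d : ℕ) : ℝ) * d ≤ ((n : ℝ) / d) * d := by nlinarith
          _ = n := by field_simp
          _ = 1 * n := by ring
      have hq0 : (0 : ℝ) ≤ ((n / d : ℕ) : ℝ) / (n : ℝ) := by positivity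
      have hmu : |(μ d : ℝ)| ≤ 1 := by exact_mod_cast (abs_moebius_le_one (n := d))
      simp only [hFdef, if_pos hd, norm_mul, norm_pow, Real.norm_eq_abs]
      calc |(μ d : ℝ)| * |((n / d : ℕ) : ℝ) / (n : ℝ)| ^ 2
          ≤ 1 * (1 / (d : ℝ)) ^ 2 := by
            refine mul_le_mul hmu ?_ (by positivity) one_pos.le
            rw [abs_of_nonneg hq0]
            exact pow_le_pow_left₀ hq0 hq 2
        _ = 1 / (d : ℝ) ^ 2 := by rw [one_mul, div_pow, one_pow]
    · simp only [hFdef, if_neg hd, norm_zero]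
      positivity
  have hmain := tendsto_tsum_of_dominated_convergence hsum hpt hbd
  have hval : ∑' d : ℕ, (μ d : ℝ) * (1 / (d : ℝ)) ^ 2 = 6 / Real.pi ^ 2 := by
    rw [← tsum_moebius]
    exact tsum_congr fun d => by rw [div_pow, one_pow, mul_one_div]
  rw [hval] at hmain
  exact Tendsto.congr (fun n => (hF n).symm) hmain
end

section
/- Quantitative Dirichlet density theorem: there is a constant C > 0 such that for every integer n ≥ 2, |(1/n²)·#{(i,j) ∈ ℕ_n² : gcd(i,j) = 1} − 6/π²| ≤ C·(log n)/n. -/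
open Filter Finset

open ArithmeticFunction ArithmeticFunction.Moebius Real in
private lemma dq_sum_div_moebius (m : ℕ) :
    ∑ d ∈ m.divisors, μ d = if m = 1 then 1 else 0 := by
  have h := congrArg (fun f : ArithmeticFunction ℤ => f m) moebius_mul_coe_zeta
  simp only [coe_mul_zeta_apply, one_apply] at h
  exact h

open ArithmeticFunction ArithmeticFunction.Moebius in
private lemma dq_count_eq (n : ℕ) :
    ((((Icc 1 n ×ˢ Icc 1 n)).filter fun p : ℕ × ℕ => Nat.gcd p.1 p.2 = 1).card : ℤ)
      = ∑ d ∈ Icc 1 n, μ d * ((n / d : ℕ) : ℤ) ^ 2 := by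
  have step1 : ((((Icc 1 n ×ˢ Icc 1 n)).filter fun p : ℕ × ℕ => Nat.gcd p.1 p.2 = 1).card : ℤ)
      = ∑ p ∈ Icc 1 n ×ˢ Icc 1 n, ∑ d ∈ Icc 1 n,
          if d ∣ p.1 ∧ d ∣ p.2 then μ d else 0 := by
    rw [Finset.card_filter]
    push_cast
    refine Finset.sum_congr rfl fun p hp => ?_
    simp only [mem_product, mem_Icc] at hp
    have h1 : p.1 ≠ 0 := by omega
    have hfil : (Icc 1 n).filter (fun d => d ∣ p.1 ∧ d ∣ p.2) = (Nat.gcd p.1 p.2).divisors := by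
      ext d
      simp only [mem_filter, mem_Icc, Nat.mem_divisors, Nat.dvd_gcd_iff]
      constructor
      · rintro ⟨⟨h1d, h2d⟩, hd⟩
        refine ⟨hd, fun h => h1 (Nat.gcd_eq_zero_iff.mp h).1⟩
      · rintro ⟨⟨hd1, hd2⟩, -⟩
        have hle : d ≤ p.1 := Nat.le_of_dvd (by omega) hd1
        have hd0 : d ≠ 0 := by
          rintro rfl; exact h1 (Nat.eq_zero_of_zero_dvd hd1)
        exact ⟨⟨by omega, by omega⟩, hd1, hd2⟩
    rw [← Finset.sum_filter, hfil, dq_sum_div_moebius]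
  rw [step1, Finset.sum_comm]
  refine Finset.sum_congr rfl fun d hd => ?_
  rw [← Finset.sum_filter, Finset.sum_const,
    Finset.filter_product (fun a => d ∣ a) (fun b => d ∣ b), Finset.card_product]
  have hIcc : Icc 1 n = Ioc 0 n := by rw [← Finset.Icc_add_one_left_eq_Ioc, zero_add]
  rw [hIcc, Nat.Ioc_filter_dvd_card_eq_div, nsmul_eq_mul]
  push_cast [Int.ofNat_tdiv]
  ring

open ArithmeticFunction ArithmeticFunction.Moebius Real in
private noncomputable def dqmf : ℕ → ℝ := fun d => (μ d : ℝ) / (d : ℝ) ^ 2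

open ArithmeticFunction ArithmeticFunction.Moebius Real in
private lemma dqmf_abs_le (d : ℕ) : |dqmf d| ≤ ((d : ℝ) ^ 2)⁻¹ := by
  rcases Nat.eq_zero_or_pos d with rfl | hd
  · simp [dqmf]
  · have h1 : |(μ d : ℝ)| ≤ 1 := by
      rw [← Int.cast_abs]
      exact_mod_cast @ArithmeticFunction.abs_moebius_le_one d
    have hd2 : (0:ℝ) < (d:ℝ)^2 := by positivity
    rw [dqmf, abs_div, abs_pow, Nat.abs_cast, div_le_iff₀ hd2, inv_mul_cancel₀ hd2.ne']
    exact h1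

private lemma dq_sq_inv_summable : Summable fun d : ℕ => ((d : ℝ) ^ 2)⁻¹ := by
  simpa [one_div] using Real.summable_one_div_nat_pow.mpr one_lt_two

private lemma dqmf_summable : Summable dqmf :=
  Summable.of_norm_bounded dq_sq_inv_summable
    (fun d => by simpa [Real.norm_eq_abs] using dqmf_abs_le d)

open ArithmeticFunction ArithmeticFunction.Moebius Real in
private lemma dqmf_tsum : ∑' d, dqmf d = 6 / π ^ 2 := by
  have h2 : (1:ℝ) < (2:ℂ).re := by norm_num
  have hterm : ∀ d : ℕ, LSeries.term (fun d => ((μ d : ℤ) : ℂ)) 2 d = ((dqmf d : ℝ) : ℂ) := by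
    intro d
    rcases Nat.eq_zero_or_pos d with rfl | hd
    · simp [dqmf]
    · rw [LSeries.term_of_ne_zero (by omega)]
      rw [show ((2:ℂ)) = ((2:ℕ):ℂ) by norm_num, Complex.cpow_natCast]
      simp [dqmf]
  have hL : LSeries (fun d => ((μ d : ℤ) : ℂ)) 2 = ((∑' d, dqmf d : ℝ) : ℂ) := by
    rw [LSeries, Complex.ofReal_tsum]
    exact tsum_congr hterm
  have hmul := LSeries_zeta_mul_Lseries_moebius h2
  rw [LSeries_zeta_eq_riemannZeta h2, riemannZeta_two, hL] at hmul
  have hπ : (π : ℝ) ^ 2 ≠ 0 := by positivity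
  have hre : ((π ^ 2 / 6 * ∑' d, dqmf d : ℝ) : ℂ) = ((1:ℝ) : ℂ) := by
    rw [Complex.ofReal_mul, Complex.ofReal_one,
      show ((π ^ 2 / 6 : ℝ) : ℂ) = (π : ℂ) ^ 2 / 6 by push_cast; ring]
    exact hmul
  have hreal : π ^ 2 / 6 * ∑' d, dqmf d = 1 := Complex.ofReal_injective hre
  field_simp at hreal ⊢
  linarith

set_option maxHeartbeats 1000000 in
private lemma dqmf_tail_bound (n : ℕ) (hn : 1 ≤ n) :
    |∑' d, dqmf d - ∑ d ∈ Icc 1 n, dqmf d| ≤ (n : ℝ)⁻¹ := by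
  have hsplit := dqmf_summable.sum_add_tsum_nat_add (n + 1)
  have hrange : ∑ i ∈ range (n + 1), dqmf i = ∑ d ∈ Icc 1 n, dqmf d := by
    refine (Finset.sum_subset (fun x hx => ?_) (fun x hx hnx => ?_)).symm
    · simp only [mem_Icc] at hx; simp only [mem_range]; omega
    · simp only [mem_range] at hx; simp only [mem_Icc] at hnx
      have : x = 0 := by omega
      subst this; simp [dqmf]
  rw [← hsplit, hrange]
  have hs : Summable fun i => dqmf (i + (n + 1)) := (summable_nat_add_iff (n + 1)).mpr dqmf_summable
  have hg : Summable fun i : ℕ => (((i + (n + 1) : ℕ) : ℝ) ^ 2)⁻¹ :=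
    (summable_nat_add_iff (n + 1)).mpr dq_sq_inv_summable
  have h1 : |∑' i, dqmf (i + (n + 1))| ≤ ∑' i : ℕ, (((i + (n + 1) : ℕ) : ℝ) ^ 2)⁻¹ := by
    have hub : ∑' i, dqmf (i + (n + 1)) ≤ ∑' i : ℕ, (((i + (n + 1) : ℕ) : ℝ) ^ 2)⁻¹ :=
      Summable.tsum_le_tsum (fun i => (abs_le.mp (dqmf_abs_le _)).2) hs hg
    have hlb : ∑' i : ℕ, -((((i + (n + 1) : ℕ) : ℝ) ^ 2)⁻¹) ≤ ∑' i, dqmf (i + (n + 1)) :=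
      Summable.tsum_le_tsum (fun i => (abs_le.mp (dqmf_abs_le _)).1) hg.neg hs
    rw [tsum_neg] at hlb
    exact abs_le.mpr ⟨by linarith, hub⟩
  have h2 : ∑' i : ℕ, (((i + (n + 1) : ℕ) : ℝ) ^ 2)⁻¹ ≤ (n : ℝ)⁻¹ := by
    refine Real.tsum_le_of_sum_range_le (fun i => by positivity) (fun m => ?_)
    have hre : ∑ i ∈ range m, (((i + (n + 1) : ℕ) : ℝ) ^ 2)⁻¹
        = ∑ j ∈ Ioc n (n + m), ((j : ℝ) ^ 2)⁻¹ := by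
      have : Ioc n (n + m) = Ico (n + 1) (n + 1 + m) := by
        ext x
        simp only [mem_Ioc, mem_Ico]
        omega
      rw [this, Finset.sum_Ico_eq_sum_range]
      simp only [add_tsub_cancel_left]
      exact Finset.sum_congr rfl fun i _ => by rw [add_comm (n+1) i]
    rw [hre]
    calc ∑ j ∈ Ioc n (n + m), ((j : ℝ) ^ 2)⁻¹ ≤ (n : ℝ)⁻¹ - ((n + m : ℕ) : ℝ)⁻¹ :=
          sum_Ioc_inv_sq_le_sub (by omega) (by omega)
      _ ≤ (n : ℝ)⁻¹ := by
          have : (0:ℝ) ≤ ((n + m : ℕ) : ℝ)⁻¹ := by positivity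
          linarith
  have heq : ∑ d ∈ Icc 1 n, dqmf d + ∑' i, dqmf (i + (n + 1)) - ∑ d ∈ Icc 1 n, dqmf d
      = ∑' i, dqmf (i + (n + 1)) := by ring
  rw [heq]
  exact h1.trans h2

private lemma dq_floor_term (n d : ℕ) (hd : 1 ≤ d) (hdn : d ≤ n) :
    |((n / d : ℕ) : ℝ) ^ 2 / (n : ℝ) ^ 2 - ((d : ℝ) ^ 2)⁻¹| ≤ 2 / ((d : ℝ) * n) := by
  have hn : 1 ≤ n := le_trans hd hdn
  set q : ℕ := n / d with hq
  set r : ℕ := n % d with hr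
  have hnat : d * q + r = n := Nat.div_add_mod n d
  have hnr : (n : ℝ) = (d : ℝ) * q + r := by exact_mod_cast hnat.symm
  have hrd : (r : ℝ) ≤ (d : ℝ) - 1 := by
    have : r < d := Nat.mod_lt _ (by omega)
    have : (r : ℝ) < d := by exact_mod_cast this
    have hri : r + 1 ≤ d := by omega
    have := (Nat.cast_le (α := ℝ)).mpr hri
    push_cast at this
    linarith
  have hr0 : (0:ℝ) ≤ r := Nat.cast_nonneg r
  have hd0 : (0:ℝ) < d := by exact_mod_cast hd
  have hn0 : (0:ℝ) < n := by exact_mod_cast hn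
  have hq0 : (0:ℝ) ≤ q := Nat.cast_nonneg q
  have hdq : (d : ℝ) * q ≤ n := by linarith
  have key : |(q : ℝ) ^ 2 * (d : ℝ) ^ 2 - (n : ℝ) ^ 2| ≤ 2 * d * n := by
    rw [abs_le]
    constructor
    · nlinarith [mul_le_mul_of_nonneg_right hrd (show (0:ℝ) ≤ (n : ℝ) + d * q by positivity),
        mul_nonneg hr0 hr0]
    · nlinarith [sq_nonneg ((n : ℝ) - d * q)]
  have heq : ((n / d : ℕ) : ℝ) ^ 2 / (n : ℝ) ^ 2 - ((d : ℝ) ^ 2)⁻¹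
      = ((q : ℝ) ^ 2 * (d : ℝ) ^ 2 - (n : ℝ) ^ 2) / ((n : ℝ) ^ 2 * (d : ℝ) ^ 2) := by
    rw [← hq]
    field_simp
  rw [heq, abs_div, abs_of_pos (show (0:ℝ) < (n:ℝ)^2 * (d:ℝ)^2 by positivity)]
  calc |(q : ℝ) ^ 2 * (d : ℝ) ^ 2 - (n : ℝ) ^ 2| / ((n : ℝ) ^ 2 * (d : ℝ) ^ 2)
      ≤ (2 * d * n) / ((n : ℝ) ^ 2 * (d : ℝ) ^ 2) := by
        gcongr
    _ = 2 / ((d : ℝ) * n) := by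
        rw [div_eq_div_iff (by positivity) (by positivity)]
        ring


open ArithmeticFunction ArithmeticFunction.Moebius Real in
private lemma dq_abs_mu (d : ℕ) : |((μ d : ℤ) : ℝ)| ≤ 1 := by
  rw [← Int.cast_abs]
  exact_mod_cast @ArithmeticFunction.abs_moebius_le_one d

open ArithmeticFunction ArithmeticFunction.Moebius Real in
private lemma dq_harmonic_eq (n : ℕ) :
    ∑ d ∈ Icc 1 n, ((d : ℝ))⁻¹ = (harmonic n : ℝ) := by
  rw [harmonic]
  push_cast
  rw [show Icc 1 n = Ico 1 (n + 1) by rw [Finset.Ico_add_one_right_eq_Icc], Finset.sum_Ico_eq_sum_range]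
  simp only [add_tsub_cancel_right]
  exact Finset.sum_congr rfl fun i _ => by rw [add_comm]; push_cast; ring

/-- **Quantitative Dirichlet density theorem**: there is a constant `C > 0` such that
for every `n ≥ 2`, the proportion of coprime pairs in `{1,…,n}²` differs from `6/π²`
by at most `C · (log n)/n`. -/
theorem dirichlet_density_quantitative :
    ∃ C : ℝ, 0 < C ∧ ∀ n : ℕ, 2 ≤ n →
      |(((Finset.Icc 1 n ×ˢ Finset.Icc 1 n).filter
            fun p : ℕ × ℕ => Nat.gcd p.1 p.2 = 1).card : ℝ) / (n : ℝ) ^ 2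
          - 6 / Real.pi ^ 2| ≤ C * Real.log n / n := by
  refine ⟨10, by norm_num, fun n hn => ?_⟩
  have hn0 : (0:ℝ) < n := by positivity
  have hn1 : 1 ≤ n := by omega
  have hcardR : ((((Finset.Icc 1 n ×ˢ Finset.Icc 1 n).filter
        fun p : ℕ × ℕ => Nat.gcd p.1 p.2 = 1).card : ℝ))
      = ∑ d ∈ Icc 1 n, ((ArithmeticFunction.moebius d : ℤ) : ℝ) * ((n / d : ℕ) : ℝ) ^ 2 := by
    have h := congrArg (fun z : ℤ => (z : ℝ)) (dq_count_eq n)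
    push_cast at h
    exact h
  have hdec : ((((Finset.Icc 1 n ×ˢ Finset.Icc 1 n).filter
        fun p : ℕ × ℕ => Nat.gcd p.1 p.2 = 1).card : ℝ)) / (n : ℝ) ^ 2 - 6 / Real.pi ^ 2
      = (∑ d ∈ Icc 1 n, (((ArithmeticFunction.moebius d : ℤ) : ℝ) * ((n / d : ℕ) : ℝ) ^ 2 / (n : ℝ) ^ 2
          - dqmf d)) - (∑' d, dqmf d - ∑ d ∈ Icc 1 n, dqmf d) := by
    rw [hcardR, Finset.sum_div, Finset.sum_sub_distrib, ← dqmf_tsum]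
    ring
  have hterm : ∀ d ∈ Icc 1 n,
      |((ArithmeticFunction.moebius d : ℤ) : ℝ) * ((n / d : ℕ) : ℝ) ^ 2 / (n : ℝ) ^ 2 - dqmf d|
        ≤ 2 / ((d : ℝ) * n) := by
    intro d hd
    simp only [mem_Icc] at hd
    have heq : ((ArithmeticFunction.moebius d : ℤ) : ℝ) * ((n / d : ℕ) : ℝ) ^ 2 / (n : ℝ) ^ 2 - dqmf d
        = ((ArithmeticFunction.moebius d : ℤ) : ℝ)
            * (((n / d : ℕ) : ℝ) ^ 2 / (n : ℝ) ^ 2 - ((d : ℝ) ^ 2)⁻¹) := by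
      simp only [dqmf]
      ring
    rw [heq, abs_mul]
    calc |((ArithmeticFunction.moebius d : ℤ) : ℝ)|
          * |((n / d : ℕ) : ℝ) ^ 2 / (n : ℝ) ^ 2 - ((d : ℝ) ^ 2)⁻¹|
        ≤ 1 * (2 / ((d : ℝ) * n)) :=
          mul_le_mul (dq_abs_mu d) (dq_floor_term n d hd.1 hd.2) (abs_nonneg _) zero_le_one
      _ = 2 / ((d : ℝ) * n) := one_mul _
  have hsum2 : ∑ d ∈ Icc 1 n, 2 / ((d : ℝ) * n) ≤ 2 / n * (1 + Real.log n) := by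
    have heq : ∑ d ∈ Icc 1 n, 2 / ((d : ℝ) * n) = 2 / n * ∑ d ∈ Icc 1 n, ((d : ℝ))⁻¹ := by
      rw [Finset.mul_sum]
      refine Finset.sum_congr rfl fun d hd => ?_
      simp only [mem_Icc] at hd
      have hd0 : (0:ℝ) < d := by exact_mod_cast hd.1
      field_simp
    rw [heq, dq_harmonic_eq]
    have := harmonic_le_one_add_log n
    have h2n : (0:ℝ) ≤ 2 / n := by positivity
    nlinarith
  have htail := dqmf_tail_bound n hn1
  have hlog2 : (0.6931471803 : ℝ) < Real.log 2 := Real.log_two_gt_d9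
  have hlogn : Real.log 2 ≤ Real.log n := by
    apply Real.log_le_log (by norm_num)
    exact_mod_cast hn
  calc |(((Finset.Icc 1 n ×ˢ Finset.Icc 1 n).filter
            fun p : ℕ × ℕ => Nat.gcd p.1 p.2 = 1).card : ℝ) / (n : ℝ) ^ 2 - 6 / Real.pi ^ 2|
      ≤ |∑ d ∈ Icc 1 n, (((ArithmeticFunction.moebius d : ℤ) : ℝ) * ((n / d : ℕ) : ℝ) ^ 2 / (n : ℝ) ^ 2
          - dqmf d)| + |∑' d, dqmf d - ∑ d ∈ Icc 1 n, dqmf d| := by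
        rw [hdec]
        exact abs_sub _ _
    _ ≤ (∑ d ∈ Icc 1 n, 2 / ((d : ℝ) * n)) + (n : ℝ)⁻¹ := by
        exact add_le_add ((Finset.abs_sum_le_sum_abs _ _).trans (Finset.sum_le_sum hterm)) htail
    _ ≤ 2 / n * (1 + Real.log n) + (n : ℝ)⁻¹ := by gcongr
    _ ≤ 10 * Real.log n / n := by
        have h8 : (3:ℝ) ≤ 8 * Real.log n := by nlinarith
        have e1 : 2 / (n:ℝ) * (1 + Real.log n) + (n:ℝ)⁻¹ = (3 + 2 * Real.log n) / n := by
          field_simp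
          ring
        rw [e1, div_le_div_iff₀ hn0 hn0]
        nlinarith
end

section
/- Value of the Dirichlet series of Υ at s = 2: the series ∑_{n=1}^∞ Υ(n)/n² converges and equals 1/(ζ(2)·F). -/
open Finset

/-- The Feller–Tornier constant `F = ∏_{p prime} (1 − 2/p²)`. -/
noncomputable def fellerTornier : ℝ := ∏' p : Nat.Primes, (1 - 2 / ((p : ℕ) : ℝ) ^ 2)

/-- The arithmetic function `Υ`, with `Υ(1) = 1` and
`Υ(n) = ∏_{p ∣ n} (1 − 1/p²)/(1 − 2/p²)` for `n ≥ 2`. -/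
noncomputable def Upsilon (n : ℕ) : ℝ :=
  if n = 0 then 1 / ((Real.pi ^ 2 / 6) * fellerTornier)
  else ∏ p ∈ n.primeFactors, (1 - 1 / (p : ℝ) ^ 2) / (1 - 2 / (p : ℝ) ^ 2)

open Real

namespace UpsilonAux

/-- The summand of the Dirichlet series, as a function on all of `ℕ` (with value `0` at `0`). -/
noncomputable def upsf (n : ℕ) : ℝ := Upsilon n / (n : ℝ) ^ 2

lemma upsf_zero : upsf 0 = 0 := by simp [upsf]

lemma upsf_one : upsf 1 = 1 := by simp [upsf, Upsilon]

lemma upsf_mul {m n : ℕ} (h : Nat.Coprime m n) : upsf (m * n) = upsf m * upsf n := by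
  rcases eq_or_ne m 0 with rfl | hm
  · simp [upsf_zero]
  rcases eq_or_ne n 0 with rfl | hn
  · simp [upsf_zero]
  unfold upsf Upsilon
  rw [if_neg (by positivity), if_neg hm, if_neg hn,
    Nat.Coprime.primeFactors_mul h, Finset.prod_union (Nat.Coprime.disjoint_primeFactors h)]
  push_cast
  rw [mul_pow]
  ring

lemma factor_pos {p : ℕ} (hp : p.Prime) :
    0 < (1 - 1 / (p : ℝ) ^ 2) / (1 - 2 / (p : ℝ) ^ 2) := by
  have h2 : (2:ℝ) ≤ p := by exact_mod_cast hp.two_le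
  have h4 : (4:ℝ) ≤ (p:ℝ)^2 := by nlinarith
  have hy : (0:ℝ) < (p:ℝ)^2 := by positivity
  apply div_pos
  · rw [sub_pos, div_lt_one hy]; linarith
  · rw [sub_pos, div_lt_one hy]; linarith

lemma factor_le {p : ℕ} (hp : p.Prime) :
    (1 - 1 / (p : ℝ) ^ 2) / (1 - 2 / (p : ℝ) ^ 2) ≤ 1 + 2 / (p:ℝ)^2 := by
  have h2 : (2:ℝ) ≤ p := by exact_mod_cast hp.two_le
  have h4 : (4:ℝ) ≤ (p:ℝ)^2 := by nlinarith
  have hy : (0:ℝ) < (p:ℝ)^2 := by positivity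
  have hden : (0:ℝ) < 1 - 2 / (p:ℝ)^2 := by rw [sub_pos, div_lt_one hy]; linarith
  rw [div_le_iff₀ hden]
  have e : (1 + 2/(p:ℝ)^2) * (1 - 2/(p:ℝ)^2) = 1 - 4/((p:ℝ)^2)^2 := by ring
  rw [e]
  have : 4/((p:ℝ)^2)^2 ≤ 1/(p:ℝ)^2 := by
    rw [div_le_div_iff₀ (by positivity) hy]; nlinarith
  linarith

lemma summable_two_div_sq : Summable (fun k : ℕ => 2 / (k:ℝ)^2) := by
  simpa [div_eq_mul_inv, mul_comm] using hasSum_zeta_two.summable.mul_left 2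

lemma upsilon_le {n : ℕ} (hn : n ≠ 0) :
    Upsilon n ≤ Real.exp (∑' k : ℕ, 2/(k:ℝ)^2) := by
  rw [Upsilon, if_neg hn]
  calc ∏ p ∈ n.primeFactors, (1 - 1 / (p : ℝ) ^ 2) / (1 - 2 / (p : ℝ) ^ 2)
      ≤ ∏ p ∈ n.primeFactors, Real.exp (2/(p:ℝ)^2) := by
        apply Finset.prod_le_prod
        · intro p hp; exact (factor_pos (Nat.prime_of_mem_primeFactors hp)).le
        · intro p hp
          have h1 := factor_le (Nat.prime_of_mem_primeFactors hp)
          have h2 := Real.add_one_le_exp (2/(p:ℝ)^2)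
          linarith
    _ = Real.exp (∑ p ∈ n.primeFactors, 2/(p:ℝ)^2) := by rw [Real.exp_sum]
    _ ≤ _ := by
        apply Real.exp_le_exp.mpr
        exact Summable.sum_le_tsum _ (fun k _ => by positivity) summable_two_div_sq

lemma upsilon_nonneg {n : ℕ} (hn : n ≠ 0) : 0 ≤ Upsilon n := by
  rw [Upsilon, if_neg hn]
  exact Finset.prod_nonneg fun p hp => (factor_pos (Nat.prime_of_mem_primeFactors hp)).le

lemma upsf_norm_summable : Summable (fun n => ‖upsf n‖) := by
  set C := Real.exp (∑' k : ℕ, 2/(k:ℝ)^2) with hC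
  have hbound : ∀ n : ℕ, ‖upsf n‖ ≤ C * (1/(n:ℝ)^2) := by
    intro n
    rcases eq_or_ne n 0 with rfl | hn
    · simp [upsf]
    · have hn2 : (0:ℝ) < (n:ℝ)^2 := by
        have : 0 < n := Nat.pos_of_ne_zero hn
        positivity
      rw [upsf, Real.norm_eq_abs, abs_div, abs_of_nonneg (upsilon_nonneg hn),
        abs_of_pos hn2, mul_one_div]
      exact div_le_div_of_nonneg_right (upsilon_le hn) hn2.le
  exact Summable.of_nonneg_of_le (fun n => norm_nonneg _) hbound
    (hasSum_zeta_two.summable.mul_left C)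

lemma ratio_identity (y : ℝ) (h4 : (4:ℝ) ≤ y) :
    ((1 - 1 / y) / (1 - 2 / y)) =
    ((1 - 1 / y) / (1 - 2 / y)) * (1 - y⁻¹)⁻¹ +
      (1 - ((1 - 1 / y) / (1 - 2 / y))) * 1 := by
  have hy : (0:ℝ) < y := by linarith
  have g1 : y - 1 ≠ 0 := by intro h; nlinarith
  have g2 : y - 2 ≠ 0 := by intro h; nlinarith
  have f1 : (1:ℝ) - 1/y = (y-1)/y := by field_simp
  have f2 : (1:ℝ) - 2/y = (y-2)/y := by
    rw [eq_div_iff hy.ne', sub_mul, div_mul_cancel₀ _ hy.ne']; ring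
  have f3 : (1:ℝ) - y⁻¹ = (y-1)/y := by field_simp
  have f4 : (y - 1) / y / ((y - 2) / y) = (y-1)/(y-2) :=
    div_div_div_cancel_right₀ hy.ne' _ _
  rw [f1, f2, f3, f4, inv_div]
  field_simp
  ring

lemma upsf_local {p : ℕ} (hp : p.Prime) :
    HasSum (fun e : ℕ => upsf (p ^ e))
      ((1 - 1 / (p : ℝ) ^ 2) / (1 - 2 / (p : ℝ) ^ 2)) := by
  have h2 : (2:ℝ) ≤ p := by exact_mod_cast hp.two_le
  have h4 : (4:ℝ) ≤ (p:ℝ)^2 := by nlinarith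
  have hy : (0:ℝ) < (p:ℝ)^2 := by positivity
  set a : ℝ := (1 - 1 / (p : ℝ) ^ 2) / (1 - 2 / (p : ℝ) ^ 2) with ha
  set x : ℝ := ((p:ℝ)^2)⁻¹ with hx
  have hx0 : 0 ≤ x := by positivity
  have hx1 : x < 1 := by
    rw [hx, inv_lt_one_iff₀]; right; linarith
  have hfe : ∀ e : ℕ, upsf (p ^ e) = a * x ^ e + (1 - a) * (if e = 0 then 1 else 0) := by
    intro e
    rcases eq_or_ne e 0 with rfl | he
    · simp [upsf_one]
    · have hpe : p ^ e ≠ 0 := pow_ne_zero _ hp.pos.ne'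
      have hpf : (p^e).primeFactors = {p} := by
        rw [Nat.primeFactors_pow _ he, Nat.Prime.primeFactors hp]
      simp only [upsf, Upsilon, if_neg hpe, hpf, Finset.prod_singleton, if_neg he]
      push_cast
      rw [← ha, show ((p:ℝ)^e)^2 = ((p:ℝ)^2)^e by ring, div_eq_mul_inv, ← inv_pow, ← hx]
      ring
  have hgeo : HasSum (fun e : ℕ => a * x ^ e) (a * (1 - x)⁻¹) :=
    (hasSum_geometric_of_lt_one hx0 hx1).mul_left a
  have hite : HasSum (fun e : ℕ => (1 - a) * (if e = 0 then 1 else 0)) ((1 - a) * 1) :=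
    HasSum.mul_left _ (hasSum_ite_eq 0 1)
  have hsum := hgeo.add hite
  rw [funext hfe]
  convert hsum using 1
  rw [ha, hx]
  exact ratio_identity _ h4

lemma abs_log_one_sub_le {t : ℝ} (h0 : 0 ≤ t) (h1 : t ≤ 1/2) : |Real.log (1 - t)| ≤ 2 * t := by
  have h : 0 < 1 - t := by linarith
  rw [abs_of_nonpos (Real.log_nonpos (by linarith) (by linarith))]
  have hlog := Real.log_le_sub_one_of_pos (inv_pos.mpr h)
  rw [Real.log_inv] at hlog
  have hkey : (1-t)⁻¹ - 1 = t * (1-t)⁻¹ := by field_simp; ring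
  have hinv : (1-t)⁻¹ ≤ 2 := by
    rw [inv_le_comm₀ h (by norm_num)]; linarith
  nlinarith

lemma summable_log_one_sub_primes {c : ℝ} (hc0 : 0 ≤ c) (hc2 : c ≤ 2) :
    Summable (fun p : Nat.Primes => Real.log (1 - c / ((p:ℕ):ℝ)^2)) := by
  have hb : Summable (fun p : Nat.Primes => 2 * (c / ((p:ℕ):ℝ)^2)) := by
    have h0 : Summable (fun n : ℕ => 2 * (c / (n:ℝ)^2)) := by
      have := hasSum_zeta_two.summable.mul_left (2*c)
      apply this.congr
      intro n
      rw [mul_one_div, mul_div_assoc]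
    exact h0.comp_injective Subtype.val_injective
  apply Summable.of_norm
  apply Summable.of_nonneg_of_le (fun p => norm_nonneg _) ?_ hb
  intro p
  have hp2 : (2:ℝ) ≤ ((p:ℕ):ℝ) := by exact_mod_cast p.prop.two_le
  have h4 : (4:ℝ) ≤ ((p:ℕ):ℝ)^2 := by nlinarith
  have ht0 : 0 ≤ c / ((p:ℕ):ℝ)^2 := by positivity
  have ht1 : c / ((p:ℕ):ℝ)^2 ≤ 1/2 := by
    rw [div_le_div_iff₀ (by positivity) (by norm_num)]; nlinarith
  simpa [Real.norm_eq_abs] using abs_log_one_sub_le ht0 ht1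

lemma hasProd_one_sub {c : ℝ} (hc0 : 0 ≤ c) (hc2 : c ≤ 2) :
    HasProd (fun p : Nat.Primes => 1 - c / ((p:ℕ):ℝ)^2)
      (∏' p : Nat.Primes, (1 - c / ((p:ℕ):ℝ)^2)) := by
  have hpos : ∀ (_ : Unit) (p : Nat.Primes), 0 < 1 - c / ((p:ℕ):ℝ)^2 := by
    intro _ p
    have hp2 : (2:ℝ) ≤ ((p:ℕ):ℝ) := by exact_mod_cast p.prop.two_le
    have h4 : (4:ℝ) ≤ ((p:ℕ):ℝ)^2 := by nlinarith
    have : c / ((p:ℕ):ℝ)^2 < 1 := by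
      rw [div_lt_one (by positivity)]; linarith
    linarith
  exact (Real.multipliable_of_summable_log (hpos ())
    (summable_log_one_sub_primes hc0 hc2)).hasProd

/-- The completely multiplicative function `n ↦ 1/n²`. -/
noncomputable def zeta2fun : ℕ →*₀ ℝ where
  toFun n := (1:ℝ) / (n:ℝ)^2
  map_zero' := by norm_num
  map_one' := by norm_num
  map_mul' m n := by
    push_cast
    rw [mul_pow, one_div, one_div, one_div, mul_inv]

lemma hasProd_zeta2 :
    HasProd (fun p : Nat.Primes => (1 - 1/((p:ℕ):ℝ)^2)⁻¹) (π^2/6) := by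
  have hsum : Summable (fun n => ‖zeta2fun n‖) := by
    apply hasSum_zeta_two.summable.congr
    intro n
    simp only [zeta2fun, MonoidWithZeroHom.coe_mk, ZeroHom.coe_mk]
    rw [Real.norm_eq_abs, abs_of_nonneg (by positivity)]
  have h := EulerProduct.eulerProduct_completely_multiplicative_hasProd hsum
  have ht : ∑' n, zeta2fun n = π^2/6 := hasSum_zeta_two.tsum_eq
  rw [ht] at h
  exact h

end UpsilonAux

open UpsilonAux in
/-- **Value of the Dirichlet series of `Υ` at `s = 2`**: the series
`∑_{n=1}^∞ Υ(n)/n²` converges and equals `1/(ζ(2)·F)`. -/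
theorem upsilon_dirichlet_series_at_two :
    HasSum (fun n : ℕ => Upsilon (n + 1) / ((n : ℝ) + 1) ^ 2)
      (1 / ((Real.pi ^ 2 / 6) * fellerTornier)) := by
  -- The Euler product for `upsf`
  have hT : HasProd
      (fun p : Nat.Primes => (1 - 1/((p:ℕ):ℝ)^2) / (1 - 2/((p:ℕ):ℝ)^2))
      (∑' n, upsf n) := by
    have h := EulerProduct.eulerProduct_hasProd upsf_one
      (fun {m n} h => upsf_mul h) upsf_norm_summable upsf_zero
    have hfun : (fun p : Nat.Primes => ∑' e, upsf ((p:ℕ) ^ e))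
        = fun p : Nat.Primes => (1 - 1/((p:ℕ):ℝ)^2) / (1 - 2/((p:ℕ):ℝ)^2) :=
      funext fun p => (upsf_local p.prop).tsum_eq
    rwa [hfun] at h
  -- auxiliary products
  have hQ := hasProd_one_sub (c := 1) (by norm_num) (by norm_num)
  have hF : HasProd (fun p : Nat.Primes => 1 - 2 / ((p:ℕ):ℝ)^2) fellerTornier :=
    hasProd_one_sub (c := 2) (by norm_num) le_rfl
  have hZ := hasProd_zeta2
  have hne : ∀ p : Nat.Primes, (1 : ℝ) - 1/((p:ℕ):ℝ)^2 ≠ 0 ∧ (1:ℝ) - 2/((p:ℕ):ℝ)^2 ≠ 0 := by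
    intro p
    have hp2 : (2:ℝ) ≤ ((p:ℕ):ℝ) := by exact_mod_cast p.prop.two_le
    have h4 : (4:ℝ) ≤ ((p:ℕ):ℝ)^2 := by nlinarith
    constructor
    · have : 1/((p:ℕ):ℝ)^2 < 1 := by rw [div_lt_one (by positivity)]; linarith
      linarith
    · have : 2/((p:ℕ):ℝ)^2 < 1 := by rw [div_lt_one (by positivity)]; linarith
      linarith
  -- Q * (π²/6) = 1
  have h1 : HasProd (fun _ : Nat.Primes => (1:ℝ))
      ((∏' p : Nat.Primes, (1 - 1 / ((p:ℕ):ℝ)^2)) * (π^2/6)) := by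
    have h2 := hQ.mul hZ
    have hfun : (fun p : Nat.Primes => (1 - 1/((p:ℕ):ℝ)^2) * (1 - 1/((p:ℕ):ℝ)^2)⁻¹)
        = fun _ : Nat.Primes => (1:ℝ) :=
      funext fun p => mul_inv_cancel₀ (hne p).1
    rwa [hfun] at h2
  have hQval : (∏' p : Nat.Primes, (1 - 1 / ((p:ℕ):ℝ)^2)) * (π^2/6) = 1 :=
    h1.unique hasProd_one
  -- T * F = Q
  have h2 : HasProd (fun p : Nat.Primes => 1 - 1 / ((p:ℕ):ℝ)^2)
      ((∑' n, upsf n) * fellerTornier) := by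
    have h3 := hT.mul hF
    have hfun : (fun p : Nat.Primes =>
        (1 - 1/((p:ℕ):ℝ)^2) / (1 - 2/((p:ℕ):ℝ)^2) * (1 - 2/((p:ℕ):ℝ)^2))
        = fun p : Nat.Primes => 1 - 1/((p:ℕ):ℝ)^2 :=
      funext fun p => div_mul_cancel₀ _ (hne p).2
    rwa [hfun] at h3
  have hTF : (∑' n, upsf n) * fellerTornier = ∏' p : Nat.Primes, (1 - 1 / ((p:ℕ):ℝ)^2) :=
    h2.unique (hasProd_one_sub (c := 1) (by norm_num) (by norm_num))
  -- solve for the value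
  have hkey : (∑' n, upsf n) * fellerTornier * (π^2/6) = 1 := by
    rw [hTF]; exact hQval
  have hπ : (0:ℝ) < π^2/6 := by positivity
  have hFne : fellerTornier ≠ 0 := by
    intro h0
    rw [h0, mul_zero, zero_mul] at hkey
    norm_num at hkey
  have hval : (∑' n, upsf n) = 1 / ((π^2/6) * fellerTornier) := by
    rw [eq_div_iff (mul_ne_zero hπ.ne' hFne)]
    linarith [hkey]
  -- conclude
  have hs : HasSum upsf (1 / ((π^2/6) * fellerTornier)) := by
    rw [← hval]; exact upsf_norm_summable.of_norm.hasSum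
  have hs1 : HasSum (fun n : ℕ => upsf (n + 1)) (1 / ((π^2/6) * fellerTornier)) := by
    refine (hasSum_nat_add_iff 1).mpr ?_
    simpa [upsf_zero] using hs
  apply hs1.congr
  intro n
  simp only [upsf]
  push_cast
  ring
end

section
/- Average of Φ_M: for every integer M ≥ 1, (1/P_M²) · ∑_{0 ≤ u,v < P_M} Φ_M(u,v) = M² · ∏_{p prime, p < M} (1 − 1/p²). -/
open Finset

lemma card_filter_image {α β : Type*} [DecidableEq β] {f : α → β} {s : Finset α} {t : Finset β}
    (hinj : Set.InjOn f ↑s) (himg : s.image f = t)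
    {P : α → Prop} {Q : β → Prop} [DecidablePred P] [DecidablePred Q]
    (hPQ : ∀ x ∈ s, (Q (f x) ↔ P x)) :
    (t.filter Q).card = (s.filter P).card := by
  have h1 : (s.filter P).image f = t.filter Q := by
    apply Finset.Subset.antisymm
    · intro y hy
      obtain ⟨x, hx, rfl⟩ := mem_image.mp hy
      have hxs := (mem_filter.mp hx).1
      exact mem_filter.mpr ⟨himg ▸ mem_image_of_mem f hxs, (hPQ x hxs).mpr (mem_filter.mp hx).2⟩
    · intro y hy
      have hyt := (mem_filter.mp hy).1
      rw [← himg] at hyt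
      obtain ⟨x, hx, rfl⟩ := mem_image.mp hyt
      exact mem_image_of_mem f (mem_filter.mpr ⟨hx, (hPQ x hx).mp (mem_filter.mp hy).2⟩)
  rw [← h1, Finset.card_image_of_injOn (hinj.mono (by exact_mod_cast filter_subset P s))]

lemma prime_count (q : ℕ) (hq : q.Prime) :
    ((Finset.range q ×ˢ Finset.range q).filter fun ab : ℕ × ℕ => ¬(q ∣ ab.1 ∧ q ∣ ab.2)).card
      = q ^ 2 - 1 := by
  have h := Finset.card_filter_add_card_filter_not
    (s := Finset.range q ×ˢ Finset.range q) (fun ab : ℕ × ℕ => q ∣ ab.1 ∧ q ∣ ab.2)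
  have h0 : ((Finset.range q ×ˢ Finset.range q).filter
      fun ab : ℕ × ℕ => q ∣ ab.1 ∧ q ∣ ab.2) = {(0, 0)} := by
    ext ⟨a, b⟩
    simp only [mem_filter, mem_product, mem_range, Finset.mem_singleton, Prod.mk.injEq]
    constructor
    · rintro ⟨⟨ha, hb⟩, hda, hdb⟩
      exact ⟨Nat.eq_zero_of_dvd_of_lt hda ha, Nat.eq_zero_of_dvd_of_lt hdb hb⟩
    · rintro ⟨rfl, rfl⟩
      exact ⟨⟨hq.pos, hq.pos⟩, dvd_zero _, dvd_zero _⟩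
  rw [h0] at h
  simp only [Finset.card_singleton, Finset.card_product, Finset.card_range] at h
  have : q ^ 2 = q * q := sq q
  omega

lemma count_lemma (S : Finset ℕ) (hS : ∀ p ∈ S, p.Prime) :
    ((Finset.range (∏ p ∈ S, p) ×ˢ Finset.range (∏ p ∈ S, p)).filter
      fun ab : ℕ × ℕ => ∀ p ∈ S, ¬(p ∣ ab.1 ∧ p ∣ ab.2)).card = ∏ p ∈ S, (p ^ 2 - 1) := by
  induction S using Finset.induction_on with
  | empty => simp
  | @insert q S' hq ih =>
    have hqp : q.Prime := hS q (mem_insert_self q S')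
    have hS' : ∀ p ∈ S', p.Prime := fun p hp => hS p (mem_insert_of_mem hp)
    set P' := ∏ p ∈ S', p with hP'
    have hP'pos : 0 < P' := Finset.prod_pos fun p hp => (hS' p hp).pos
    have hco : Nat.Coprime q P' :=
      Nat.Coprime.prod_right fun p hp =>
        (Nat.coprime_primes hqp (hS' p hp)).mpr (fun h => hq (h ▸ hp))
    have hprod : ∏ p ∈ insert q S', p = q * P' := Finset.prod_insert hq
    rw [hprod]
    set N := q * P' with hN
    have hNpos : 0 < N := Nat.mul_pos hqp.pos hP'pos
    set f : ℕ × ℕ → (ℕ × ℕ) × (ℕ × ℕ) :=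
      fun ab => ((ab.1 % q, ab.2 % q), (ab.1 % P', ab.2 % P')) with hf
    set s : Finset (ℕ × ℕ) := Finset.range N ×ˢ Finset.range N with hs
    set t : Finset ((ℕ × ℕ) × (ℕ × ℕ)) :=
      (Finset.range q ×ˢ Finset.range q) ×ˢ (Finset.range P' ×ˢ Finset.range P') with ht
    have key : ∀ a b : ℕ, a < N → b < N → a % q = b % q → a % P' = b % P' → a = b := by
      intro a b ha hb h1 h2
      have : a ≡ b [MOD N] :=
        (Nat.modEq_and_modEq_iff_modEq_mul hco).mp ⟨h1, h2⟩
      calc a = a % N := (Nat.mod_eq_of_lt ha).symm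
        _ = b % N := this
        _ = b := Nat.mod_eq_of_lt hb
    have hinj : Set.InjOn f ↑s := by
      rintro ⟨a, b⟩ hab ⟨a', b'⟩ hab' heq
      simp only [hs, coe_product, Set.mem_prod, coe_range, Set.mem_Iio] at hab hab'
      simp only [hf, Prod.mk.injEq] at heq
      exact Prod.ext (key a a' hab.1 hab'.1 heq.1.1 heq.2.1)
        (key b b' hab.2 hab'.2 heq.1.2 heq.2.2)
    have himg : s.image f = t := by
      apply Finset.eq_of_subset_of_card_le
      · intro y hy
        obtain ⟨⟨a, b⟩, hab, rfl⟩ := mem_image.mp hy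
        simp only [ht, mem_product, mem_range, hf]
        exact ⟨⟨Nat.mod_lt _ hqp.pos, Nat.mod_lt _ hqp.pos⟩,
          ⟨Nat.mod_lt _ hP'pos, Nat.mod_lt _ hP'pos⟩⟩
      · rw [Finset.card_image_of_injOn hinj]
        simp only [hs, ht, Finset.card_product, Finset.card_range, hN]
        ring_nf
        omega
    have := card_filter_image (f := f) hinj himg
      (P := fun ab : ℕ × ℕ => ∀ p ∈ insert q S', ¬(p ∣ ab.1 ∧ p ∣ ab.2))
      (Q := fun x : (ℕ × ℕ) × (ℕ × ℕ) =>
        (¬(q ∣ x.1.1 ∧ q ∣ x.1.2)) ∧ ∀ p ∈ S', ¬(p ∣ x.2.1 ∧ p ∣ x.2.2))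
      (by
        rintro ⟨a, b⟩ _
        simp only [hf, Finset.forall_mem_insert]
        rw [Nat.dvd_mod_iff (dvd_refl q), Nat.dvd_mod_iff (dvd_refl q)]
        constructor
        · rintro ⟨h1, h2⟩
          refine ⟨h1, fun p hp => ?_⟩
          have hd : p ∣ P' := Finset.dvd_prod_of_mem _ hp
          rw [← Nat.dvd_mod_iff hd, ← Nat.dvd_mod_iff (m := b) hd]
          exact h2 p hp
        · rintro ⟨h1, h2⟩
          refine ⟨h1, fun p hp => ?_⟩
          have hd : p ∣ P' := Finset.dvd_prod_of_mem _ hp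
          rw [Nat.dvd_mod_iff hd, Nat.dvd_mod_iff (m := b) hd]
          exact h2 p hp)
    rw [← this, ht]
    rw [Finset.filter_product (fun y : ℕ × ℕ => ¬(q ∣ y.1 ∧ q ∣ y.2))
      (fun y : ℕ × ℕ => ∀ p ∈ S', ¬(p ∣ y.1 ∧ p ∣ y.2)), Finset.card_product,
      ih hS', Finset.prod_insert hq]
    rw [prime_count q hqp]

/-- `PM M = ∏_{p prime, p < M} p` (so `PM 1 = PM 2 = 1`). -/
def PM (M : ℕ) : ℕ := ∏ p ∈ (Finset.range M).filter Nat.Prime, p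

/-- `Phi M u v` is the number of pairs `(k,l)` with `1 ≤ k,l ≤ M` such that no prime
`p < M` divides both `u + k` and `v + l`. -/
def Phi (M u v : ℕ) : ℕ :=
  (((Finset.Icc 1 M) ×ˢ (Finset.Icc 1 M)).filter
    fun kl : ℕ × ℕ => ∀ p : ℕ, p < M → p.Prime → ¬(p ∣ u + kl.1 ∧ p ∣ v + kl.2)).card

lemma shift_count (M : ℕ) (k l : ℕ) :
    ((Finset.range (PM M) ×ˢ Finset.range (PM M)).filter
      fun uv : ℕ × ℕ => ∀ p ∈ (Finset.range M).filter Nat.Prime,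
        ¬(p ∣ uv.1 + k ∧ p ∣ uv.2 + l)).card
    = ((Finset.range (PM M) ×ˢ Finset.range (PM M)).filter
      fun ab : ℕ × ℕ => ∀ p ∈ (Finset.range M).filter Nat.Prime,
        ¬(p ∣ ab.1 ∧ p ∣ ab.2)).card := by
  set S := (Finset.range M).filter Nat.Prime with hSdef
  have hS : ∀ p ∈ S, p.Prime := fun p hp => (mem_filter.mp hp).2
  set P := PM M with hPdef
  have hPeq : P = ∏ p ∈ S, p := rfl
  have hPpos : 0 < P := by
    rw [hPeq]; exact Finset.prod_pos fun p hp => (hS p hp).pos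
  set f : ℕ × ℕ → ℕ × ℕ := fun uv => ((uv.1 + k) % P, (uv.2 + l) % P) with hf
  set s : Finset (ℕ × ℕ) := Finset.range P ×ˢ Finset.range P with hs
  have key : ∀ c a b : ℕ, a < P → b < P → (a + c) % P = (b + c) % P → a = b := by
    intro c a b ha hb h
    have : a ≡ b [MOD P] := Nat.ModEq.add_right_cancel' c h
    calc a = a % P := (Nat.mod_eq_of_lt ha).symm
      _ = b % P := this
      _ = b := Nat.mod_eq_of_lt hb
  have hinj : Set.InjOn f ↑s := by
    rintro ⟨a, b⟩ hab ⟨a', b'⟩ hab' heq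
    simp only [hs, coe_product, Set.mem_prod, coe_range, Set.mem_Iio] at hab hab'
    simp only [hf, Prod.mk.injEq] at heq
    exact Prod.ext (key k a a' hab.1 hab'.1 heq.1) (key l b b' hab.2 hab'.2 heq.2)
  have himg : s.image f = s := by
    apply Finset.eq_of_subset_of_card_le
    · intro y hy
      obtain ⟨⟨a, b⟩, hab, rfl⟩ := mem_image.mp hy
      simp only [hs, mem_product, mem_range, hf]
      exact ⟨Nat.mod_lt _ hPpos, Nat.mod_lt _ hPpos⟩
    · rw [Finset.card_image_of_injOn hinj]
  have := card_filter_image (f := f) hinj himg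
    (P := fun uv : ℕ × ℕ => ∀ p ∈ S, ¬(p ∣ uv.1 + k ∧ p ∣ uv.2 + l))
    (Q := fun ab : ℕ × ℕ => ∀ p ∈ S, ¬(p ∣ ab.1 ∧ p ∣ ab.2))
    (by
      rintro ⟨a, b⟩ _
      simp only [hf]
      constructor <;> intro h p hp <;>
        have hd : p ∣ P := hPeq ▸ Finset.dvd_prod_of_mem _ hp
      · rw [← Nat.dvd_mod_iff hd, ← Nat.dvd_mod_iff (m := b + l) hd]
        exact h p hp
      · rw [Nat.dvd_mod_iff hd, Nat.dvd_mod_iff (m := b + l) hd]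
        exact h p hp)
  exact this.symm

lemma sum_phi (M : ℕ) :
    ∑ u ∈ Finset.range (PM M), ∑ v ∈ Finset.range (PM M), Phi M u v
      = M ^ 2 * ∏ p ∈ (Finset.range M).filter Nat.Prime, (p ^ 2 - 1) := by
  set S := (Finset.range M).filter Nat.Prime with hSdef
  have hS : ∀ p ∈ S, p.Prime := fun p hp => (mem_filter.mp hp).2
  set P := PM M with hPdef
  have hPhi : ∀ u v : ℕ, Phi M u v =
      (((Finset.Icc 1 M) ×ˢ (Finset.Icc 1 M)).filter
        fun kl : ℕ × ℕ => ∀ p ∈ S, ¬(p ∣ u + kl.1 ∧ p ∣ v + kl.2)).card := by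
    intro u v
    unfold Phi
    congr 1
    apply Finset.filter_congr
    intro kl _
    simp only [hSdef, mem_filter, mem_range, and_imp]
  calc ∑ u ∈ Finset.range P, ∑ v ∈ Finset.range P, Phi M u v
      = ∑ uv ∈ Finset.range P ×ˢ Finset.range P,
          ∑ kl ∈ (Finset.Icc 1 M) ×ˢ (Finset.Icc 1 M),
            if ∀ p ∈ S, ¬(p ∣ uv.1 + kl.1 ∧ p ∣ uv.2 + kl.2) then 1 else 0 := by
        rw [Finset.sum_product]
        exact Finset.sum_congr rfl fun u _ => Finset.sum_congr rfl fun v _ => by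
          rw [hPhi u v, Finset.card_filter]
    _ = ∑ kl ∈ (Finset.Icc 1 M) ×ˢ (Finset.Icc 1 M),
          ∑ uv ∈ Finset.range P ×ˢ Finset.range P,
            if ∀ p ∈ S, ¬(p ∣ uv.1 + kl.1 ∧ p ∣ uv.2 + kl.2) then 1 else 0 :=
        Finset.sum_comm
    _ = ∑ kl ∈ (Finset.Icc 1 M) ×ˢ (Finset.Icc 1 M),
          ((Finset.range P ×ˢ Finset.range P).filter
            fun ab : ℕ × ℕ => ∀ p ∈ S, ¬(p ∣ ab.1 ∧ p ∣ ab.2)).card := by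
        refine Finset.sum_congr rfl fun kl _ => ?_
        rw [← Finset.card_filter]
        exact shift_count M kl.1 kl.2
    _ = M ^ 2 * ∏ p ∈ S, (p ^ 2 - 1) := by
        rw [Finset.sum_const, Finset.card_product, Nat.card_Icc]
        have hc := count_lemma S hS
        rw [show (∏ p ∈ S, p) = P from rfl] at hc
        rw [hc]
        simp [sq, smul_eq_mul]

/-- **Average of `Φ_M`**: for every `M ≥ 1`,
`(1/P_M²) · ∑_{0 ≤ u,v < P_M} Φ_M(u,v) = M² · ∏_{p prime, p < M} (1 − 1/p²)`. -/
theorem phi_average (M : ℕ) (hM : 1 ≤ M) :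
    (1 / (PM M : ℝ) ^ 2) *
        ∑ u ∈ Finset.range (PM M), ∑ v ∈ Finset.range (PM M), (Phi M u v : ℝ) =
      (M : ℝ) ^ 2 * ∏ p ∈ (Finset.range M).filter Nat.Prime, (1 - 1 / (p : ℝ) ^ 2) := by
  set S := (Finset.range M).filter Nat.Prime with hSdef
  have hS : ∀ p ∈ S, p.Prime := fun p hp => (mem_filter.mp hp).2
  have hPpos : 0 < PM M := Finset.prod_pos fun p hp => (hS p hp).pos
  have hsum : ∑ u ∈ Finset.range (PM M), ∑ v ∈ Finset.range (PM M), (Phi M u v : ℝ)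
      = ((M ^ 2 * ∏ p ∈ S, (p ^ 2 - 1) : ℕ) : ℝ) := by
    rw [← sum_phi M]
    push_cast
    rfl
  rw [hsum]
  have hcast : ((M ^ 2 * ∏ p ∈ S, (p ^ 2 - 1) : ℕ) : ℝ)
      = (M : ℝ) ^ 2 * ∏ p ∈ S, ((p : ℝ) ^ 2 - 1) := by
    rw [Nat.cast_mul, Nat.cast_prod, Nat.cast_pow]
    congr 1
    refine Finset.prod_congr rfl fun p hp => ?_
    have h1 : 1 ≤ p ^ 2 := Nat.one_le_pow _ _ (hS p hp).pos
    push_cast [Nat.cast_sub h1]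
    ring
  rw [hcast]
  have hP : (PM M : ℝ) = ∏ p ∈ S, (p : ℝ) := by
    unfold PM
    rw [hSdef]
    exact Nat.cast_prod _ _
  have hfin : (1 / (PM M : ℝ) ^ 2) * ∏ p ∈ S, ((p : ℝ) ^ 2 - 1)
      = ∏ p ∈ S, (1 - 1 / (p : ℝ) ^ 2) := by
    rw [hP, ← Finset.prod_pow]
    rw [one_div, ← Finset.prod_inv_distrib, ← Finset.prod_mul_distrib]
    refine Finset.prod_congr rfl fun p hp => ?_
    have hp0 : (p : ℝ) ≠ 0 := Nat.cast_ne_zero.mpr (hS p hp).pos.ne'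
    field_simp
  rw [← hfin]
  ring
end
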